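/- Let H be a complex Hilbert space, n, m ≥ 0, and let p(z,w) = Σ_{i=0}^n Σ_{j=0}^m p_{ij} z^i w^j and r(z,w) = Σ_{i=0}^n Σ_{j=0}^m r_{ij} z^i w^j be stable polynomials with coefficients in B(H) such that p₀₀ is positive definite and (p(z,w)⁻¹)* p(z,w)⁻¹ = r(z,w)⁻¹ (r(z,w)⁻¹)* for all (z,w) ∈ 𝕋². Write p(z,w) = Σ_{i=0}^m p_i(z) w^i and r(z,w) = Σ_{i=0}^m r_i(z) w^i, with the convention p_i(z) = r_i(z) = 0 for i < 0 or i > m. Fix k ≥ m−1. For z ∈ ℂ∖{0} let E_k(z) = P⁽ᵏ⁾(z)·(P⁽ᵏ⁾(1/conj(z)))* − (R⁽ᵏ⁾(1/conj(z)))*·R⁽ᵏ⁾(z), where P⁽ᵏ⁾(z) is the (k+1)×(k+1) lower triangular block Toeplitz matrix with (i,j) entry p_{i−j}(z) and R⁽ᵏ⁾(z) is the (k+1)×(k+1) upper triangular block Toeplitz matrix with (i,j) entry r_{k+1+i−j}(z), 0 ≤ i,j ≤ k; define E_{k+1}(z) analogously with k replaced by k+1. Suppose M_k(z) is a (k+1)×(k+1)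 operator-matrix polynomial such that M_k is stable, M_k(z)·(M_k(1/conj(z)))* = E_k(z) for all z ≠ 0, and M_k(0) is lower triangular with positive definite diagonal entries. Define the (k+2)×(k+2) operator-matrix polynomial M_{k+1}(z) with block form M_{k+1}(z) = [[p_0(z), 0],[col(p_1(z),…,p_{k+1}(z)), M_k(z)]]. Then M_{k+1} is stable, M_{k+1}(z)·(M_{k+1}(1/conj(z)))* = E_{k+1}(z) for all z ≠ 0, and M_{k+1}(0) is lower triangular with positive definite diagonal entries; i.e., M_{k+1} is the left stable factor of E_{k+1}. -/

import Mathlib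

/- STATEMENT 16: the recursion for the left stable factors M_k of E_k
   (equation (ttten) of the paper): if M_k is the left stable factor of E_k, then
   M_{k+1}(z) = [[p₀(z), 0], [col(p₁(z),…,p_{k+1}(z)), M_k(z)]] is the left stable
   factor of E_{k+1}. -/

noncomputable section

open ContinuousLinearMap Matrix

variable {H : Type*} [NormedAddCommGroup H] [InnerProductSpace ℂ H] [CompleteSpace H]

/-- A bounded operator is positive definite: self-adjoint and bounded below by `ε·I`. -/
def IsPosDefOp (T : H →L[ℂ] H) : Prop :=
  IsSelfAdjoint T ∧ ∃ ε : ℝ, 0 < ε ∧ ∀ x : H, ε * ‖x‖ ^ 2 ≤ (inner ℂ (T x) x : ℂ).re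

/-- The value at (z,w) of the two-variable operator polynomial with coefficients `p i j`. -/
def polyEval2 {n m : ℕ} (p : Fin (n+1) → Fin (m+1) → (H →L[ℂ] H)) (z w : ℂ) : H →L[ℂ] H :=
  ∑ i : Fin (n+1), ∑ j : Fin (m+1), (z ^ (i : ℕ) * w ^ (j : ℕ)) • p i j

/-- The coefficient polynomial p_i(z) = Σ_{l=0}^n p_{l i} z^l of w^i in p(z,w), with the
convention p_i = 0 for i < 0 or i > m. -/
def wCoeff {n m : ℕ} (p : Fin (n+1) → Fin (m+1) → (H →L[ℂ] H)) (i : ℤ) (z : ℂ) :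
    H →L[ℂ] H :=
  if h : 0 ≤ i ∧ i ≤ (m : ℤ) then
    ∑ l : Fin (n+1), z ^ (l : ℕ) • p l ⟨i.toNat, by omega⟩
  else 0

/-- The (k+1)×(k+1) lower triangular block Toeplitz matrix P⁽ᵏ⁾(z) with (i,j) entry
p_{i-j}(z). -/
def Pmat {n m : ℕ} (p : Fin (n+1) → Fin (m+1) → (H →L[ℂ] H)) (k : ℕ) (z : ℂ) :
    Matrix (Fin (k+1)) (Fin (k+1)) (H →L[ℂ] H) :=
  Matrix.of fun i j => wCoeff p ((i : ℤ) - (j : ℤ)) z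

/-- The (k+1)×(k+1) upper triangular block Toeplitz matrix R⁽ᵏ⁾(z) with (i,j) entry
r_{k+1+i-j}(z). -/
def Rmat {n m : ℕ} (r : Fin (n+1) → Fin (m+1) → (H →L[ℂ] H)) (k : ℕ) (z : ℂ) :
    Matrix (Fin (k+1)) (Fin (k+1)) (H →L[ℂ] H) :=
  Matrix.of fun i j => wCoeff r ((k : ℤ) + 1 + (i : ℤ) - (j : ℤ)) z

/-- E_k(z) = P⁽ᵏ⁾(z)·(P⁽ᵏ⁾(1/conj z))* − (R⁽ᵏ⁾(1/conj z))*·R⁽ᵏ⁾(z). -/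
def Emat {n m : ℕ} (p r : Fin (n+1) → Fin (m+1) → (H →L[ℂ] H)) (k : ℕ) (z : ℂ) :
    Matrix (Fin (k+1)) (Fin (k+1)) (H →L[ℂ] H) :=
  Pmat p k z * (Pmat p k ((starRingEnd ℂ z)⁻¹))ᴴ -
    (Rmat r k ((starRingEnd ℂ z)⁻¹))ᴴ * Rmat r k z

/-! ### Auxiliary lemmas -/

lemma wCoeff_eq_zero {n m : ℕ} (p : Fin (n+1) → Fin (m+1) → (H →L[ℂ] H)) {i : ℤ}
    (h : ¬(0 ≤ i ∧ i ≤ (m : ℤ))) (z : ℂ) : wCoeff p i z = 0 := dif_neg h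

lemma polyEval2_at_zero {n m : ℕ} (p : Fin (n+1) → Fin (m+1) → (H →L[ℂ] H)) (z : ℂ) :
    polyEval2 p z 0 = wCoeff p 0 z := by
  rw [polyEval2, wCoeff, dif_pos ⟨le_refl 0, by positivity⟩]
  refine Finset.sum_congr rfl fun l _ => ?_
  rw [Fin.sum_univ_succ]
  simp

lemma wCoeff_zero_at_zero {n m : ℕ} (p : Fin (n+1) → Fin (m+1) → (H →L[ℂ] H)) :
    wCoeff p 0 (0 : ℂ) = p 0 0 := by
  rw [wCoeff, dif_pos ⟨le_refl 0, by positivity⟩, Fin.sum_univ_succ]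
  simp

/-- A lower block-triangular matrix over a (noncommutative) ring with invertible diagonal
blocks is invertible (two-sided). -/
def myFromBlocksInv {α : Type*} [Ring α] {m' n' : Type*} [Fintype m'] [Fintype n']
    [DecidableEq m'] [DecidableEq n'] (A : Matrix m' m' α) (C : Matrix n' m' α)
    (D : Matrix n' n' α) [Invertible A] [Invertible D] :
    Invertible (Matrix.fromBlocks A 0 C D) where
  invOf := Matrix.fromBlocks (⅟A) 0 (-(⅟D * C * ⅟A)) (⅟D)
  invOf_mul_self := by
    simp_rw [Matrix.fromBlocks_multiply, Matrix.mul_zero, Matrix.zero_mul, zero_add, add_zero,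
      Matrix.neg_mul, invOf_mul_self, Matrix.invOf_mul_cancel_right, neg_add_cancel,
      Matrix.fromBlocks_one]
  mul_invOf_self := by
    simp_rw [Matrix.fromBlocks_multiply, Matrix.mul_zero, Matrix.zero_mul, zero_add, add_zero,
      Matrix.mul_neg, ← Matrix.mul_assoc, mul_invOf_self, Matrix.one_mul, add_neg_cancel,
      Matrix.fromBlocks_one]

/-- A submatrix along an equivalence of an invertible matrix is invertible. -/
def mySubmatrixInv {α : Type*} [Ring α] {m' n' : Type*} [Fintype m'] [Fintype n']
    [DecidableEq m'] [DecidableEq n'] (M : Matrix m' m' α) (e : n' ≃ m') [Invertible M] :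
    Invertible (M.submatrix e e) where
  invOf := (⅟M).submatrix e e
  invOf_mul_self := by
    rw [Matrix.submatrix_mul_equiv, invOf_mul_self, Matrix.submatrix_one_equiv]
  mul_invOf_self := by
    rw [Matrix.submatrix_mul_equiv, mul_invOf_self, Matrix.submatrix_one_equiv]

/-- A `1×1` matrix with invertible entry is invertible. -/
def myOneByOneInv {α : Type*} [Ring α] (a : α) [Invertible a] :
    Invertible (Matrix.of (fun _ _ => a) : Matrix (Fin 1) (Fin 1) α) where
  invOf := Matrix.of fun _ _ => ⅟a
  invOf_mul_self := by
    ext i j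
    simp [Matrix.mul_apply, Matrix.one_apply, Subsingleton.elim i j]
  mul_invOf_self := by
    ext i j
    simp [Matrix.mul_apply, Matrix.one_apply, Subsingleton.elim i j]

/-- The splitting equivalence `Fin (k+2) ≃ Fin 1 ⊕ Fin (k+1)`. -/
def finSplit (k : ℕ) : Fin (k+2) ≃ (Fin 1 ⊕ Fin (k+1)) where
  toFun := Fin.cases (Sum.inl 0) Sum.inr
  invFun := Sum.elim (fun _ => 0) Fin.succ
  left_inv i := by
    induction i using Fin.cases <;> simp
  right_inv x := by
    rcases x with x | x
    · simp only [Sum.elim_inl, Fin.cases_zero]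
      exact congrArg Sum.inl (Subsingleton.elim _ _)
    · simp

@[simp] lemma finSplit_zero (k : ℕ) : finSplit k 0 = Sum.inl 0 := rfl
@[simp] lemma finSplit_succ (k : ℕ) (i : Fin (k+1)) : finSplit k i.succ = Sum.inr i := by
  simp [finSplit]

lemma Pmat_apply {n m : ℕ} (p : Fin (n+1) → Fin (m+1) → (H →L[ℂ] H)) (k : ℕ) (z : ℂ)
    (i j : Fin (k+1)) : Pmat p k z i j = wCoeff p ((i : ℤ) - (j : ℤ)) z := rfl

lemma Rmat_apply {n m : ℕ} (r : Fin (n+1) → Fin (m+1) → (H →L[ℂ] H)) (k : ℕ) (z : ℂ)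
    (i j : Fin (k+1)) : Rmat r k z i j = wCoeff r ((k : ℤ) + 1 + (i : ℤ) - (j : ℤ)) z := rfl

theorem left_stable_factor_recursion (n m : ℕ)
    (p r : Fin (n+1) → Fin (m+1) → (H →L[ℂ] H))
    (hpstable : ∀ z w : ℂ, ‖z‖ ≤ 1 → ‖w‖ ≤ 1 → IsUnit (polyEval2 p z w))
    (hrstable : ∀ z w : ℂ, ‖z‖ ≤ 1 → ‖w‖ ≤ 1 → IsUnit (polyEval2 r z w))
    (hp00 : IsPosDefOp (p 0 0))
    (heq : ∀ z w : ℂ, ‖z‖ = 1 → ‖w‖ = 1 →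
      star (Ring.inverse (polyEval2 p z w)) * Ring.inverse (polyEval2 p z w) =
        Ring.inverse (polyEval2 r z w) * star (Ring.inverse (polyEval2 r z w)))
    (k : ℕ) (hk : m ≤ k + 1)
    -- M_k : an operator-matrix polynomial …
    (Mk : ℂ → Matrix (Fin (k+1)) (Fin (k+1)) (H →L[ℂ] H))
    (hMkpoly : ∃ (d : ℕ) (Mc : ℕ → Matrix (Fin (k+1)) (Fin (k+1)) (H →L[ℂ] H)),
      ∀ z : ℂ, Mk z = ∑ i ∈ Finset.range (d+1), z ^ i • Mc i)
    -- … which is stable, …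
    (hMkstable : ∀ z : ℂ, ‖z‖ ≤ 1 → IsUnit (Mk z))
    -- … factors E_k, …
    (hMkfact : ∀ z : ℂ, z ≠ 0 → Mk z * (Mk ((starRingEnd ℂ z)⁻¹))ᴴ = Emat p r k z)
    -- … and with M_k(0) lower triangular with positive definite diagonal entries
    (hMktri : ∀ i j : Fin (k+1), i < j → Mk 0 i j = 0)
    (hMkdiag : ∀ i : Fin (k+1), IsPosDefOp (Mk 0 i i))
    -- M_{k+1}(z) = [[p₀(z), 0],[col(p₁(z),…,p_{k+1}(z)), M_k(z)]]
    (Mk1 : ℂ → Matrix (Fin (k+2)) (Fin (k+2)) (H →L[ℂ] H))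
    (hMk1 : ∀ (z : ℂ) (i j : Fin (k+2)), Mk1 z i j =
      if hi : (i : ℕ) = 0 then (if (j : ℕ) = 0 then wCoeff p 0 z else 0)
      else if hj : (j : ℕ) = 0 then wCoeff p (i : ℤ) z
      else Mk z ⟨(i : ℕ) - 1, by have := i.isLt; omega⟩ ⟨(j : ℕ) - 1, by have := j.isLt; omega⟩) :
    -- then M_{k+1} is the left stable factor of E_{k+1}:
    (∀ z : ℂ, ‖z‖ ≤ 1 → IsUnit (Mk1 z)) ∧
    (∀ z : ℂ, z ≠ 0 → Mk1 z * (Mk1 ((starRingEnd ℂ z)⁻¹))ᴴ = Emat p r (k+1) z) ∧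
    (∀ i j : Fin (k+2), i < j → Mk1 0 i j = 0) ∧
    (∀ i : Fin (k+2), IsPosDefOp (Mk1 0 i i)) := by
  -- entry lemmas for Mk1
  have h00 : ∀ z : ℂ, Mk1 z 0 0 = wCoeff p 0 z := by
    intro z; rw [hMk1]; simp
  have h0s : ∀ (z : ℂ) (j : Fin (k+1)), Mk1 z 0 j.succ = 0 := by
    intro z j; rw [hMk1]; simp
  have hs0 : ∀ (z : ℂ) (i : Fin (k+1)), Mk1 z i.succ 0 = wCoeff p ((i : ℤ) + 1) z := by
    intro z i; rw [hMk1]; simp [Fin.val_succ]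
  have hss : ∀ (z : ℂ) (i j : Fin (k+1)), Mk1 z i.succ j.succ = Mk z i j := by
    intro z i j; rw [hMk1]; simp [Fin.val_succ]
  -- entry lemmas for Pmat (k+1)
  have hP00 : ∀ z : ℂ, Pmat p (k+1) z 0 0 = wCoeff p 0 z := by
    intro z; rw [Pmat_apply]; norm_num
  have hP0s : ∀ (z : ℂ) (j : Fin (k+1)), Pmat p (k+1) z 0 j.succ = 0 := by
    intro z j
    rw [Pmat_apply]
    apply wCoeff_eq_zero
    simp only [Fin.val_succ, Fin.val_zero]
    push_cast
    omega
  have hPs0 : ∀ (z : ℂ) (i : Fin (k+1)), Pmat p (k+1) z i.succ 0 = wCoeff p ((i : ℤ) + 1) z := by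
    intro z i
    rw [Pmat_apply, show ((i.succ : Fin (k+2)) : ℤ) - ((0 : Fin (k+2)) : ℤ) = (i : ℤ) + 1 by
      simp only [Fin.val_succ, Fin.val_zero, Nat.cast_add, Nat.cast_zero, Nat.cast_one]; ring]
  have hPss : ∀ (z : ℂ) (i j : Fin (k+1)),
      Pmat p (k+1) z i.succ j.succ = Pmat p k z i j := by
    intro z i j
    rw [Pmat_apply, Pmat_apply, show ((i.succ : Fin (k+2)) : ℤ) - ((j.succ : Fin (k+2)) : ℤ)
        = (i : ℤ) - (j : ℤ) by
      simp only [Fin.val_succ, Nat.cast_add, Nat.cast_one]; ring]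
  -- entry lemmas for Rmat (k+1)
  have hRcol : ∀ (z : ℂ) (s : Fin (k+2)), Rmat r (k+1) z s 0 = 0 := by
    intro z s
    rw [Rmat_apply]
    apply wCoeff_eq_zero
    have := s.isLt
    simp only [Fin.val_zero]
    push_cast
    omega
  have hRlast : ∀ (z : ℂ) (j : Fin (k+2)), Rmat r (k+1) z (Fin.last (k+1)) j = 0 := by
    intro z j
    rw [Rmat_apply]
    apply wCoeff_eq_zero
    have := j.isLt
    simp only [Fin.val_last]
    push_cast
    omega
  have hRcs : ∀ (z : ℂ) (s j : Fin (k+1)),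
      Rmat r (k+1) z s.castSucc j.succ = Rmat r k z s j := by
    intro z s j
    rw [Rmat_apply, Rmat_apply, show ((k+1 : ℕ) : ℤ) + 1 + ((s.castSucc : Fin (k+2)) : ℤ)
        - ((j.succ : Fin (k+2)) : ℤ) = ((k : ℕ) : ℤ) + 1 + (s : ℤ) - (j : ℤ) by
      simp only [Fin.val_succ, Fin.coe_castSucc, Nat.cast_add, Nat.cast_one]; ring]
  refine ⟨?_, ?_, ?_, ?_⟩
  · -- stability
    intro z hz
    have hA : IsUnit (wCoeff p 0 z) := by
      rw [← polyEval2_at_zero]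
      exact hpstable z 0 hz (by norm_num)
    obtain ⟨iA⟩ := hA.nonempty_invertible
    obtain ⟨iD⟩ := (hMkstable z hz).nonempty_invertible
    set A : Matrix (Fin 1) (Fin 1) (H →L[ℂ] H) :=
      Matrix.of (fun _ _ => wCoeff p 0 z) with hA_def
    set C : Matrix (Fin (k+1)) (Fin 1) (H →L[ℂ] H) :=
      Matrix.of (fun i _ => wCoeff p ((i : ℤ) + 1) z) with hC_def
    letI : Invertible A := myOneByOneInv (wCoeff p 0 z)
    letI : Invertible (Matrix.fromBlocks A 0 C (Mk z)) := myFromBlocksInv A C (Mk z)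
    have hrepr : Mk1 z = (Matrix.fromBlocks A 0 C (Mk z)).submatrix (finSplit k) (finSplit k) := by
      ext i j
      induction i using Fin.cases with
      | zero =>
        induction j using Fin.cases with
        | zero => simp [Matrix.submatrix_apply, h00, hA_def]
        | succ j => simp [Matrix.submatrix_apply, h0s]
      | succ i =>
        induction j using Fin.cases with
        | zero => simp [Matrix.submatrix_apply, hs0, hC_def]
        | succ j => simp [Matrix.submatrix_apply, hss]
    rw [hrepr]
    letI := mySubmatrixInv (Matrix.fromBlocks A 0 C (Mk z)) (finSplit k)
    exact isUnit_of_invertible _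
  · -- factorization
    intro z hz
    set w : ℂ := (starRingEnd ℂ z)⁻¹ with hw_def
    have hE : ∀ i' j' : Fin (k+1),
        (∑ s : Fin (k+1), Mk z i' s * star (Mk w j' s)) =
          (∑ s : Fin (k+1), Pmat p k z i' s * star (Pmat p k w j' s)) -
            ∑ s : Fin (k+1), star (Rmat r k w s i') * Rmat r k z s j' := by
      intro i' j'
      have h := hMkfact z hz
      have h2 : (Mk z * (Mk w)ᴴ) i' j' = Emat p r k z i' j' := by rw [h]
      simpa [Matrix.mul_apply, Matrix.conjTranspose_apply, Emat, Matrix.sub_apply] using h2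
    ext i j
    simp only [Matrix.mul_apply, Matrix.conjTranspose_apply, Emat, Matrix.sub_apply]
    rw [Fin.sum_univ_succ (f := fun s => Mk1 z i s * star (Mk1 w j s)),
      Fin.sum_univ_succ (f := fun s => Pmat p (k+1) z i s * star (Pmat p (k+1) w j s)),
      Fin.sum_univ_castSucc (f := fun s => star (Rmat r (k+1) w s i) * Rmat r (k+1) z s j)]
    induction i using Fin.cases with
    | zero =>
      induction j using Fin.cases with
      | zero =>
        simp [h00, h0s, hP00, hP0s, hRcol]
      | succ j =>
        have hRz : ∀ s : Fin (k+1), Rmat r (k+1) w s.castSucc 0 = 0 := fun s => hRcol w _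
        simp [h00, h0s, hs0, hP00, hP0s, hPs0, hRcol, hRlast, hRz]
    | succ i =>
      induction j using Fin.cases with
      | zero =>
        have hRz : ∀ s : Fin (k+1), Rmat r (k+1) z s.castSucc 0 = 0 := fun s => hRcol z _
        simp [h00, h0s, hs0, hss, hP00, hP0s, hPs0, hPss, hRcol, hRlast, hRz]
      | succ j =>
        simp only [hs0, hss, hPs0, hPss, hRcs, hRlast, star_zero, mul_zero, zero_mul, add_zero]
        rw [hE i j]
        abel
  · -- lower triangularity at 0
    intro i j hij
    induction i using Fin.cases with
    | zero =>
      induction j using Fin.cases with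
      | zero => exact absurd hij (lt_irrefl _)
      | succ j => exact h0s 0 j
    | succ i =>
      induction j using Fin.cases with
      | zero => simp [Fin.lt_def, Fin.val_succ] at hij
      | succ j =>
        rw [hss]
        exact hMktri i j (Fin.succ_lt_succ_iff.mp hij)
  · -- positive definite diagonal at 0
    intro i
    induction i using Fin.cases with
    | zero =>
      rw [h00, wCoeff_zero_at_zero]
      exact hp00
    | succ i =>
      rw [hss]
      exact hMkdiag i
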